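/- Let h be a 2-step nilpotent real Lie algebra. Define on h⊗C the bracket [X⊗a, Y⊗b] := (conj(a·b))·[X,Y] (conjugate-bilinear in the scalars) and the complex structure J(X⊗a) := X⊗(ia). Then (h⊗C, J) is a real Lie algebra satisfying J[u,v] = -[Ju,v] = -[u,Jv] for all u,v, i.e. it is quasi-Kähler Chern-flat. -/

import Mathlib

/-- Given a 2-step nilpotent real Lie algebra `h`, its complexification
`h ⊗ ℂ` (modelled as `h × h`, with `(u₁, u₂)` standing for `u₁ ⊗ 1 + u₂ ⊗ i`)
carries the conjugate-twisted bracket `[X⊗a, Y⊗b] = [X,Y] ⊗ conj(ab)`, given in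
these coordinates by
`qb (u₁,u₂) (v₁,v₂) = ([u₁,v₁] - [u₂,v₂], -[u₁,v₂] - [u₂,v₁])`,
and the complex structure `J(X⊗a) = X ⊗ (ia)`, i.e. `J (u₁,u₂) = (-u₂, u₁)`.
Then `qb` satisfies the Jacobi identity (so `h ⊗ ℂ` is a Lie algebra) and
`J[u,v] = -[Ju,v] = -[u,Jv]`, i.e. it is quasi-Kähler Chern-flat. -/
theorem qkcf_conjugate_complexification (h : Type*) [LieRing h] [LieAlgebra ℝ h]
    [FiniteDimensional ℝ h]
    (hnil : ∀ X Y Z : h, ⁅⁅X, Y⁆, Z⁆ = 0)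
    (qb : h × h → h × h → h × h)
    (hqb : ∀ u v : h × h,
      qb u v = (⁅u.1, v.1⁆ - ⁅u.2, v.2⁆, -⁅u.1, v.2⁆ - ⁅u.2, v.1⁆))
    (J : h × h → h × h) (hJ : ∀ u : h × h, J u = (-u.2, u.1)) :
    (∀ u v w : h × h, qb (qb u v) w + qb (qb v w) u + qb (qb w u) v = 0) ∧
    (∀ u v : h × h, J (qb u v) = -qb (J u) v) ∧
    (∀ u v : h × h, J (qb u v) = -qb u (J v)) := by
  have hnil' : ∀ X Y Z : h, ⁅X, ⁅Y, Z⁆⁆ = 0 := by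
    intro X Y Z
    rw [← lie_skew, hnil, neg_zero]
  refine ⟨?_, ?_, ?_⟩
  · intro u v w
    simp only [hqb, Prod.mk_add_mk, Prod.mk.injEq, sub_lie, lie_sub, neg_lie, lie_neg,
      hnil, hnil', Prod.mk_eq_zero]
    constructor <;> abel
  · intro u v
    simp only [hqb, hJ, Prod.neg_mk, Prod.mk.injEq, neg_lie, lie_neg, neg_sub, neg_neg]
    constructor <;> first | trivial | abel
  · intro u v
    simp only [hqb, hJ, Prod.neg_mk, Prod.mk.injEq, neg_lie, lie_neg, neg_sub, neg_neg]
    constructor <;> first | trivial | abel
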